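/- For all positive integers n and k there exists a de Bruijn cycle of all n-letter words over a k-letter alphabet: there is a function f : ZMod (k^n) → Fin k such that the map sending each i ∈ ZMod (k^n) to the word (j : Fin n) ↦ f(i + j) is a bijection from ZMod (k^n) onto the set of all words Fin n → Fin k. -/

import Mathlib

private lemma perm_pow_fixed_iter {α : Type*} (σ : Equiv.Perm α) (a : α) {p : ℕ}
    (hp : (σ ^ p) a = a) : ∀ q, ((σ ^ p) ^ q) a = a := by
  intro q
  induction q with
  | zero => simp
  | succ q ih => rw [pow_succ, Equiv.Perm.mul_apply, hp, ih]

private lemma perm_pow_apply_mod {α : Type*} (σ : Equiv.Perm α) (a : α) {p : ℕ}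
    (hp : (σ ^ p) a = a) (t : ℕ) : (σ ^ t) a = (σ ^ (t % p)) a := by
  conv_lhs => rw [← Nat.mod_add_div t p]
  rw [pow_add, Equiv.Perm.mul_apply, pow_mul, perm_pow_fixed_iter σ a hp (t / p)]

private lemma merge_cycles {α : Type*} [Fintype α] [DecidableEq α] (σ : Equiv.Perm α) (a b : α)
    (hab : ¬ σ.SameCycle a b) :
    (∀ x, σ.SameCycle a x → (σ * Equiv.swap a b).SameCycle a x) ∧
      (σ * Equiv.swap a b).SameCycle a b := by
  set σ' := σ * Equiv.swap a b with hσ'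
  set p := Function.minimalPeriod (⇑σ) a with hpdef
  have hp0 : 0 < p := by
    refine Function.IsPeriodicPt.minimalPeriod_pos (orderOf_pos σ) ?_
    show (⇑σ)^[orderOf σ] a = a
    rw [Equiv.Perm.iterate_eq_pow, pow_orderOf_eq_one]
    rfl
  have hpa : (σ ^ p) a = a := Function.iterate_minimalPeriod
  have hmin : ∀ l, 0 < l → l < p → (σ ^ l) a ≠ a := by
    intro l hl hlp h
    exact Function.not_isPeriodicPt_of_pos_of_lt_minimalPeriod hl.ne' hlp h
  have hnotb : ∀ t : ℕ, (σ ^ t) a ≠ b := fun t h =>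
    hab ⟨t, by rw [zpow_natCast]; exact h⟩
  have key : ∀ t, t < p → (σ' ^ t) (σ a) = (σ ^ (t + 1)) a := by
    intro t
    induction t with
    | zero => intro _; simp
    | succ t ih =>
      intro ht
      rw [pow_succ', Equiv.Perm.mul_apply, ih (by omega)]
      have hne1 : (σ ^ (t + 1)) a ≠ a := hmin (t + 1) (Nat.succ_pos t) ht
      have hne2 : (σ ^ (t + 1)) a ≠ b := hnotb (t + 1)
      rw [hσ', Equiv.Perm.mul_apply, Equiv.swap_apply_of_ne_of_ne hne1 hne2,
        ← Equiv.Perm.mul_apply, ← pow_succ']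
  have hcyc1 : σ'.SameCycle (σ a) a := ⟨(p - 1 : ℕ), by
    rw [zpow_natCast, key (p - 1) (by omega), show p - 1 + 1 = p by omega, hpa]⟩
  have hb : σ'.SameCycle b (σ a) := ⟨1, by
    rw [zpow_one, hσ', Equiv.Perm.mul_apply, Equiv.swap_apply_right]⟩
  constructor
  · intro x hx
    obtain ⟨i, _, hi⟩ := hx.exists_pow_eq'
    have hi' : (σ ^ (i % p)) a = x := by
      rw [← perm_pow_apply_mod σ a hpa]; exact hi
    rcases Nat.eq_zero_or_pos (i % p) with h0 | hpos
    · rw [h0, pow_zero, Equiv.Perm.one_apply] at hi'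
      exact hi' ▸ Equiv.Perm.SameCycle.refl σ' a
    · have hlt : i % p < p := Nat.mod_lt _ hp0
      obtain ⟨j, hj⟩ : ∃ j, i % p = j + 1 := ⟨i % p - 1, by omega⟩
      have hjx : (σ' ^ j) (σ a) = x := by rw [key j (by omega), ← hj, hi']
      exact hcyc1.symm.trans ⟨j, by rw [zpow_natCast]; exact hjx⟩
  · exact (hb.trans hcyc1).symm

private lemma exists_compat_single_cycle (n k : ℕ) (hn : 0 < n) (hk : 0 < k) :
    ∃ σ : Equiv.Perm (Fin n → Fin k),
      (∀ e : Fin n → Fin k, ∀ i : ℕ, ∀ h : i + 1 < n,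
          σ e ⟨i, Nat.lt_of_succ_lt h⟩ = e ⟨i + 1, h⟩) ∧
      ∀ x, σ.SameCycle (fun _ => ⟨0, hk⟩) x := by
  classical
  obtain ⟨m, rfl⟩ : ∃ m, n = m + 1 := ⟨n - 1, by omega⟩
  set E := Fin (m + 1) → Fin k with hE
  let e₀ : E := fun _ => ⟨0, hk⟩
  let R : E → E → Prop := fun e y => ∀ i : ℕ, ∀ h : i + 1 < m + 1,
      y ⟨i, Nat.lt_of_succ_lt h⟩ = e ⟨i + 1, h⟩
  let rot : Equiv.Perm E :=
    { toFun := fun e j => e (j + 1)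
      invFun := fun e j => e (j - 1)
      left_inv := fun e => funext fun j => by simp
      right_inv := fun e => funext fun j => by simp }
  have hrot : ∀ e, R e (rot e) := by
    intro e i h
    show e (⟨i, Nat.lt_of_succ_lt h⟩ + 1) = e ⟨i + 1, h⟩
    congr 1
    apply Fin.ext
    rw [Fin.val_add, Fin.val_one']
    have h1 : 1 % (m + 1) = 1 := Nat.mod_eq_of_lt (by omega)
    rw [h1]
    exact Nat.mod_eq_of_lt h
  let cand : Finset (Equiv.Perm E) := Finset.univ.filter (fun τ => ∀ e, R e (τ e))
  have hne : cand.Nonempty := ⟨rot, Finset.mem_filter.mpr ⟨Finset.mem_univ _, hrot⟩⟩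
  obtain ⟨σ, hσmem, hσmax⟩ := Finset.exists_max_image cand
      (fun τ => (Finset.univ.filter (τ.SameCycle e₀)).card) hne
  have hPred : ∀ e, R e (σ e) := (Finset.mem_filter.mp hσmem).2
  refine ⟨σ, hPred, ?_⟩
  by_contra hfull
  push_neg at hfull
  obtain ⟨w, hw⟩ := hfull
  -- the "beat" step: a crossing swap contradicts maximality
  have beat : ∀ a b : E, (∀ e, R e ((σ * Equiv.swap a b) e)) → σ.SameCycle e₀ a →
      ¬ σ.SameCycle e₀ b → False := by
    intro a b hpred ha hb
    have hab : ¬ σ.SameCycle a b := fun h => hb (ha.trans h)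
    obtain ⟨hsub, hnew⟩ := merge_cycles σ a b hab
    have hae : (σ * Equiv.swap a b).SameCycle a e₀ := hsub e₀ ha.symm
    have hsubset : Finset.univ.filter (σ.SameCycle e₀) ⊆
        Finset.univ.filter ((σ * Equiv.swap a b).SameCycle e₀) := by
      intro x hx
      simp only [Finset.mem_filter, Finset.mem_univ, true_and] at hx ⊢
      exact hae.symm.trans (hsub x (ha.symm.trans hx))
    have hbmem : b ∈ Finset.univ.filter ((σ * Equiv.swap a b).SameCycle e₀) := by
      simp only [Finset.mem_filter, Finset.mem_univ, true_and]
      exact hae.symm.trans hnew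
    have hbnot : b ∉ Finset.univ.filter (σ.SameCycle e₀) := by
      simp only [Finset.mem_filter, Finset.mem_univ, true_and]
      exact hb
    have hlt := Finset.card_lt_card
      ((Finset.ssubset_iff_of_subset hsubset).mpr ⟨b, hbmem, hbnot⟩)
    have hle := hσmax (σ * Equiv.swap a b)
      (Finset.mem_filter.mpr ⟨Finset.mem_univ _, hpred⟩)
    omega
  by_cases hprec : ∃ a b : E, σ.SameCycle e₀ a ∧ ¬ σ.SameCycle e₀ b ∧
      (∀ i : ℕ, ∀ h : i + 1 < m + 1, a ⟨i, Nat.lt_of_succ_lt h⟩ = b ⟨i, Nat.lt_of_succ_lt h⟩)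
  · obtain ⟨a, b, ha, hb, hpre⟩ := hprec
    have heq : Equiv.swap a b * σ = σ * Equiv.swap (σ⁻¹ a) (σ⁻¹ b) :=
      Equiv.swap_mul_eq_mul_swap σ a b
    have happ : ∀ e, (σ * Equiv.swap (σ⁻¹ a) (σ⁻¹ b)) e = Equiv.swap a b (σ e) := by
      intro e
      rw [← heq]; rfl
    refine beat (σ⁻¹ a) (σ⁻¹ b) ?_ ?_ ?_
    · intro e i h
      rw [happ e]
      rcases eq_or_ne (σ e) a with hsa | hsa
      · rw [hsa, Equiv.swap_apply_left, ← hpre i h, ← hsa]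
        exact hPred e i h
      · rcases eq_or_ne (σ e) b with hsb | hsb
        · rw [hsb, Equiv.swap_apply_right, hpre i h, ← hsb]
          exact hPred e i h
        · rw [Equiv.swap_apply_of_ne_of_ne hsa hsb]
          exact hPred e i h
    · exact (Equiv.Perm.sameCycle_symm_apply_right (f := σ)).mpr ha
    · exact fun hc => hb ((Equiv.Perm.sameCycle_symm_apply_right (f := σ)).mp hc)
  · push_neg at hprec
    have hclosed : ∀ e y : E, σ.SameCycle e₀ e → R e y → σ.SameCycle e₀ y := by
      intro e y he hy
      by_contra hyn
      obtain ⟨i, h, hne⟩ := hprec (σ e) y (he.trans ⟨1, by simp⟩) hyn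
      exact hne (by rw [hPred e i h, ← hy i h])
    let v : (q : ℕ) → q ≤ m + 1 → E := fun q hq j =>
      if h : (j : ℕ) + q < m + 1 then ⟨0, hk⟩ else w ⟨(j : ℕ) + q - (m + 1), by omega⟩
    have hchain : ∀ q (hq : q ≤ m + 1), σ.SameCycle e₀ (v q hq) := by
      intro q
      induction q with
      | zero =>
        intro hq
        have hv0 : v 0 hq = e₀ := funext fun j => dif_pos (by omega)
        rw [hv0]
      | succ q ih =>
        intro hq
        refine hclosed (v q (by omega)) (v (q + 1) hq) (ih (by omega)) ?_
        intro i h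
        simp only [v]
        rcases Nat.lt_or_ge (i + (q + 1)) (m + 1) with hlt | hge
        · rw [dif_pos hlt, dif_pos (by omega)]
        · rw [dif_neg (by omega), dif_neg (by omega)]
          congr 1
          exact Fin.mk_eq_mk.mpr (by omega)
    have hvw : v (m + 1) le_rfl = w := by
      funext j
      simp only [v]
      rw [dif_neg (by omega)]
      congr 1
      exact Fin.mk_eq_mk.mpr (by omega)
    exact hw (hvw ▸ hchain (m + 1) le_rfl)

/-- For all positive integers `n` and `k` there exists a de Bruijn cycle of all
`n`-letter words over a `k`-letter alphabet: a cyclic sequence `f` of length `k ^ n`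
whose `n`-windows enumerate all words `Fin n → Fin k`, each exactly once. -/
theorem exists_deBruijn_cycle (n k : ℕ) (hn : 0 < n) (hk : 0 < k) :
    ∃ f : ZMod (k ^ n) → Fin k,
      Function.Bijective
        (fun i : ZMod (k ^ n) => fun j : Fin n => f (i + ((j : ℕ) : ZMod (k ^ n)))) := by
  classical
  obtain ⟨σ, hR, hfull⟩ := exists_compat_single_cycle n k hn hk
  haveI : NeZero (k ^ n) := ⟨pow_ne_zero n (by omega)⟩
  set e₀ : Fin n → Fin k := fun _ => ⟨0, hk⟩ with he₀
  set p := Function.minimalPeriod (⇑σ) e₀ with hpdef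
  have hpa : (σ ^ p) e₀ = e₀ := Function.iterate_minimalPeriod
  have hp0 : 0 < p := by
    refine Function.IsPeriodicPt.minimalPeriod_pos (orderOf_pos σ) ?_
    show (⇑σ)^[orderOf σ] e₀ = e₀
    rw [Equiv.Perm.iterate_eq_pow, pow_orderOf_eq_one]
    rfl
  have hcard : Fintype.card (Fin n → Fin k) = k ^ n := by simp
  have hNlep : k ^ n ≤ p := by
    rw [← hcard]
    have hsurj : Function.Surjective (fun j : Fin p => (σ ^ (j : ℕ)) e₀) := by
      intro x
      obtain ⟨i, _, hi⟩ := (hfull x).exists_pow_eq'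
      refine ⟨⟨i % p, Nat.mod_lt _ hp0⟩, ?_⟩
      show (σ ^ (i % p)) e₀ = x
      rw [← perm_pow_apply_mod σ e₀ hpa]
      exact hi
    calc Fintype.card (Fin n → Fin k) ≤ Fintype.card (Fin p) :=
          Fintype.card_le_of_surjective _ hsurj
      _ = p := Fintype.card_fin p
  have hplen : p ≤ k ^ n := by
    rw [← hcard]
    have hinj : Function.Injective (fun j : Fin p => (σ ^ (j : ℕ)) e₀) := by
      intro j₁ j₂ hj
      exact Fin.ext (Function.iterate_injOn_Iio_minimalPeriod
        (Set.mem_Iio.mpr j₁.isLt) (Set.mem_Iio.mpr j₂.isLt) hj)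
    calc p = Fintype.card (Fin p) := (Fintype.card_fin p).symm
      _ ≤ Fintype.card (Fin n → Fin k) := Fintype.card_le_of_injective _ hinj
  have hpN : p = k ^ n := le_antisymm hplen hNlep
  let g : ZMod (k ^ n) → (Fin n → Fin k) := fun i => (σ ^ i.val) e₀
  have hNfix : (σ ^ (k ^ n)) e₀ = e₀ := by rw [← hpN]; exact hpa
  have hgadd : ∀ (i : ZMod (k ^ n)) (t : ℕ), g (i + (t : ZMod (k ^ n))) = (σ ^ t) (g i) := by
    intro i t
    show (σ ^ (i + (t : ZMod (k ^ n))).val) e₀ = (σ ^ t) ((σ ^ i.val) e₀)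
    have h1 : (i + (t : ZMod (k ^ n))).val = (i.val + t) % (k ^ n) := by
      rw [ZMod.val_add, ZMod.val_natCast]
      conv_rhs => rw [Nat.add_mod]
      rw [Nat.mod_eq_of_lt (ZMod.val_lt i)]
    rw [h1, ← perm_pow_apply_mod σ e₀ hNfix, add_comm, pow_add, Equiv.Perm.mul_apply]
  have hwin : ∀ (jv : ℕ) (h : jv < n) (i : ZMod (k ^ n)),
      g (i + (jv : ZMod (k ^ n))) ⟨0, hn⟩ = g i ⟨jv, h⟩ := by
    intro jv
    induction jv with
    | zero => intro h i; rw [Nat.cast_zero, add_zero]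
    | succ jv ih =>
      intro h i
      have hcast : ((jv + 1 : ℕ) : ZMod (k ^ n)) =
          ((1 : ℕ) : ZMod (k ^ n)) + ((jv : ℕ) : ZMod (k ^ n)) := by push_cast; ring
      rw [hcast, ← add_assoc, ih (by omega) (i + ((1 : ℕ) : ZMod (k ^ n))), hgadd i 1, pow_one]
      exact hR (g i) jv h
  refine ⟨fun i => g i ⟨0, hn⟩, ?_⟩
  have heq : (fun (i : ZMod (k ^ n)) (j : Fin n) =>
      g (i + ((j : ℕ) : ZMod (k ^ n))) ⟨0, hn⟩) = g :=
    funext fun i => funext fun j => hwin j j.isLt i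
  show Function.Bijective (fun (i : ZMod (k ^ n)) (j : Fin n) =>
      g (i + ((j : ℕ) : ZMod (k ^ n))) ⟨0, hn⟩)
  rw [heq]
  rw [Fintype.bijective_iff_injective_and_card]
  constructor
  · intro i₁ i₂ hg
    have hv1 : i₁.val < p := by rw [hpN]; exact ZMod.val_lt i₁
    have hv2 : i₂.val < p := by rw [hpN]; exact ZMod.val_lt i₂
    have hval : i₁.val = i₂.val := Function.iterate_injOn_Iio_minimalPeriod
      (Set.mem_Iio.mpr hv1) (Set.mem_Iio.mpr hv2) hg
    exact ZMod.val_injective _ hval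
  · rw [ZMod.card, hcard]
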